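/- Let Ω ⊂ ℝⁿ be a special Lipschitz domain, (φ_j)_{j≥0} a Littlewood–Paley family associated with Ω, and (ψ_j)_{j≥0} Schwartz functions with vanishing moments, the scaling property ψ_j = 2^{(j−1)n}ψ₁(2^{j−1}·) for j ≥ 2, support in the cone K (so Ω − K ⊆ Ω), and Σ_j ψ_j ∗ φ_j = δ₀. Then the operator E_Ω f := Σ_{j≥0} ψ_j ∗ (𝟙_Ω · (φ_j ∗ f)) satisfies (E_Ω f)|_Ω = f for every f ∈ 𝒮′(Ω). -/

import Mathlib

open MeasureTheory Filter Topology

/-- The first `m` coordinates of a point of `ℝ^{m+1}`. -/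
noncomputable def initCoord (m : ℕ) (x : EuclideanSpace ℝ (Fin (m + 1))) :
    EuclideanSpace ℝ (Fin m) :=
  WithLp.toLp 2 (fun i : Fin m => x i.castSucc)

/-- The last coordinate of a point of `ℝ^{m+1}`. -/
noncomputable def lastCoord (m : ℕ) (x : EuclideanSpace ℝ (Fin (m + 1))) : ℝ :=
  x (Fin.last m)


lemma rychkov_key (n : ℕ) (a b : SchwartzMap (EuclideanSpace ℝ (Fin n)) ℝ)
    (f : EuclideanSpace ℝ (Fin n) → ℝ) (hf : Continuous f) (C : ℝ)
    (hC : ∀ x, |f x| ≤ C) (x : EuclideanSpace ℝ (Fin n)) :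
    (∫ y, a (x - y) * ∫ z, b (y - z) * f z)
      = ∫ y, (∫ z, a (y - z) * b z) * f (x - y) := by
  have hC0 : 0 ≤ C := le_trans (abs_nonneg _) (hC 0)
  have ha : Integrable (fun y => a y) volume := a.integrable
  have hb : Integrable (fun y => b y) volume := b.integrable
  -- LHS = ∫ u ∫ v, a u * (b v * f (x - u - v))
  have L1 : (∫ y, a (x - y) * ∫ z, b (y - z) * f z)
      = ∫ u, ∫ v, a u * (b v * f (x - u - v)) := by
    rw [← integral_sub_left_eq_self (fun y => a (x - y) * ∫ z, b (y - z) * f z) volume x]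
    refine integral_congr_ae (Filter.Eventually.of_forall fun u => ?_)
    dsimp only
    have h1 : x - (x - u) = u := by abel
    rw [h1]
    rw [← integral_sub_left_eq_self (fun z => b ((x - u) - z) * f z) volume (x - u)]
    rw [← integral_const_mul]
    refine integral_congr_ae (Filter.Eventually.of_forall fun v => ?_)
    dsimp only
    have h2 : (x - u) - ((x - u) - v) = v := by abel
    rw [h2]
  -- RHS = ∫ v ∫ u, a u * (b v * f (x - u - v))
  have P2 : Integrable (fun p : (EuclideanSpace ℝ (Fin n)) × (EuclideanSpace ℝ (Fin n)) =>
      a (p.1 - p.2) * b p.2 * f (x - p.1)) (volume.prod volume) := by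
    have hg : Integrable (fun p : (EuclideanSpace ℝ (Fin n)) × (EuclideanSpace ℝ (Fin n)) =>
        (|b p.2| * C) * |a (p.1 - p.2)|) (volume.prod volume) :=
      Integrable.convolution_integrand (ContinuousLinearMap.mul ℝ ℝ)
        (hb.abs.mul_const C) ha.abs
    refine hg.mono' ?_ (Filter.Eventually.of_forall fun p => ?_)
    · exact (((a.continuous.comp (continuous_fst.sub continuous_snd)).mul
        (b.continuous.comp continuous_snd)).mul
        (hf.comp (continuous_const.sub continuous_fst))).aestronglyMeasurable
    · have : ‖a (p.1 - p.2) * b p.2 * f (x - p.1)‖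
          = |a (p.1 - p.2)| * |b p.2| * |f (x - p.1)| := by
        simp [abs_mul]
      rw [this]
      calc |a (p.1 - p.2)| * |b p.2| * |f (x - p.1)|
          ≤ |a (p.1 - p.2)| * |b p.2| * C := by
            gcongr
            exact hC _
        _ = (|b p.2| * C) * |a (p.1 - p.2)| := by ring
  have R1 : (∫ y, (∫ z, a (y - z) * b z) * f (x - y))
      = ∫ v, ∫ u, a u * (b v * f (x - u - v)) := by
    have : (∫ y, (∫ z, a (y - z) * b z) * f (x - y))
        = ∫ y, ∫ z, a (y - z) * b z * f (x - y) := by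
      refine integral_congr_ae (Filter.Eventually.of_forall fun y => ?_)
      dsimp only
      rw [← integral_mul_const]
    rw [this, integral_integral_swap P2]
    refine integral_congr_ae (Filter.Eventually.of_forall fun v => ?_)
    dsimp only
    rw [← integral_add_right_eq_self (fun y => a (y - v) * b v * f (x - y)) v]
    refine integral_congr_ae (Filter.Eventually.of_forall fun u => ?_)
    dsimp only
    have h1 : u + v - v = u := by abel
    have h2 : x - (u + v) = x - u - v := by abel
    rw [h1, h2]; ring
  -- swap
  have P1 : Integrable (fun p : (EuclideanSpace ℝ (Fin n)) × (EuclideanSpace ℝ (Fin n)) =>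
      a p.1 * (b p.2 * f (x - p.1 - p.2))) (volume.prod volume) := by
    have hg : Integrable (fun p : (EuclideanSpace ℝ (Fin n)) × (EuclideanSpace ℝ (Fin n)) =>
        (|a p.1| * |b p.2|) * C) (volume.prod volume) :=
      (ha.abs.mul_prod hb.abs).mul_const C
    refine hg.mono' ?_ (Filter.Eventually.of_forall fun p => ?_)
    · exact ((a.continuous.comp continuous_fst).mul
        ((b.continuous.comp continuous_snd).mul
        (hf.comp ((continuous_const.sub continuous_fst).sub continuous_snd)))).aestronglyMeasurable
    · have : ‖a p.1 * (b p.2 * f (x - p.1 - p.2))‖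
          = |a p.1| * (|b p.2| * |f (x - p.1 - p.2)|) := by simp [abs_mul]
      rw [this]
      calc |a p.1| * (|b p.2| * |f (x - p.1 - p.2)|)
          ≤ |a p.1| * (|b p.2| * C) := by gcongr; exact hC _
        _ = (|a p.1| * |b p.2|) * C := by ring
  rw [L1, R1, integral_integral_swap P1]

/-- **Rychkov's extension operator restricts to the identity on `Ω`.** Let
`Ω = {xₙ > ρ(x')}` be a special Lipschitz domain, `(φ_j)` a Littlewood–Paley family
associated with `Ω` (vanishing moments for `φ₁`, scaling for `j ≥ 2`, `Σ_j φ_j = δ₀`,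
support in the cone `K = {xₙ < −M|x'|}`), and `(ψ_j)` Schwartz functions with vanishing
moments, the same scaling, support in `K`, and `Σ_j ψ_j ∗ φ_j = δ₀`. Then
`E_Ω f := Σ_j ψ_j ∗ (𝟙_Ω · (φ_j ∗ f))` satisfies `(E_Ω f)|_Ω = f`. -/
theorem stmt15 (m : ℕ) (ρ : EuclideanSpace ℝ (Fin m) → ℝ) (M : ℝ) (hM : 0 ≤ M)
    (hρ : LipschitzWith M.toNNReal ρ)
    (Ω K : Set (EuclideanSpace ℝ (Fin (m + 1))))
    (hΩ : Ω = {x | ρ (initCoord m x) < lastCoord m x})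
    (hK : K = {x | lastCoord m x < -M * ‖initCoord m x‖})
    (φ ψ : ℕ → SchwartzMap (EuclideanSpace ℝ (Fin (m + 1))) ℝ)
    (hφsupp : ∀ j, Function.support (φ j) ⊆ K)
    (hψsupp : ∀ j, Function.support (ψ j) ⊆ K)
    (hφmom : ∀ α : Fin (m + 1) → ℕ,
      ∫ x : EuclideanSpace ℝ (Fin (m + 1)), (∏ i, x i ^ α i) * φ 1 x = 0)
    (hψmom : ∀ α : Fin (m + 1) → ℕ,
      ∫ x : EuclideanSpace ℝ (Fin (m + 1)), (∏ i, x i ^ α i) * ψ 1 x = 0)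
    (hφscal : ∀ j : ℕ, 2 ≤ j → ∀ x,
      φ j x = 2 ^ ((j - 1) * (m + 1)) * φ 1 ((2 : ℝ) ^ (j - 1) • x))
    (hψscal : ∀ j : ℕ, 2 ≤ j → ∀ x,
      ψ j x = 2 ^ ((j - 1) * (m + 1)) * ψ 1 ((2 : ℝ) ^ (j - 1) • x))
    (f : EuclideanSpace ℝ (Fin (m + 1)) → ℝ)
    (hf : Continuous f) (hfb : ∃ Cf : ℝ, ∀ x, |f x| ≤ Cf)
    -- `Σ_j φ_j = δ₀`, tested against translates of `f`:
    (hδφ : ∀ x, Tendsto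
      (fun mm => ∑ j ∈ Finset.range mm, ∫ y, φ j y * f (x - y)) atTop (𝓝 (f x)))
    -- `Σ_j ψ_j ∗ φ_j = δ₀`, tested against translates of `f`:
    (hδ : ∀ x, Tendsto
      (fun mm => ∑ j ∈ Finset.range mm, ∫ y, (∫ z, ψ j (y - z) * φ j z) * f (x - y))
      atTop (𝓝 (f x))) :
    ∀ x ∈ Ω, Tendsto
      (fun mm => ∑ j ∈ Finset.range mm,
        ∫ y, ψ j (x - y) * Set.indicator Ω (fun y' => ∫ z, φ j (y' - z) * f z) y)
      atTop (𝓝 (f x)) := by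
  intro x hx
  obtain ⟨C, hC⟩ := hfb
  -- the cone property: if `x ∈ Ω` and `x - y ∈ K` then `y ∈ Ω`
  have cone : ∀ y : EuclideanSpace ℝ (Fin (m + 1)), x - y ∈ K → y ∈ Ω := by
    intro y hxy
    rw [hK, Set.mem_setOf_eq] at hxy
    rw [hΩ, Set.mem_setOf_eq] at hx ⊢
    have hix : initCoord m (x - y) = initCoord m x - initCoord m y := by
      ext i
      simp [initCoord]
    have hlx : lastCoord m (x - y) = lastCoord m x - lastCoord m y := by
      simp [lastCoord]
    have hlip : ρ (initCoord m y) - ρ (initCoord m x)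
        ≤ M * ‖initCoord m (x - y)‖ := by
      have h := hρ.dist_le_mul (initCoord m y) (initCoord m x)
      rw [Real.coe_toNNReal M hM] at h
      have h2 : dist (initCoord m y) (initCoord m x) = ‖initCoord m (x - y)‖ := by
        rw [hix, dist_eq_norm, ← norm_neg]
        congr 1
        abel
      rw [h2] at h
      calc ρ (initCoord m y) - ρ (initCoord m x)
          ≤ |ρ (initCoord m y) - ρ (initCoord m x)| := le_abs_self _
        _ = dist (ρ (initCoord m y)) (ρ (initCoord m x)) := (Real.dist_eq _ _).symm
        _ ≤ M * ‖initCoord m (x - y)‖ := h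
    rw [hlx] at hxy
    linarith
  refine Tendsto.congr (fun mm => ?_) (hδ x)
  refine Finset.sum_congr rfl fun j _ => ?_
  rw [← rychkov_key (m + 1) (ψ j) (φ j) f hf C hC x]
  refine integral_congr_ae (Filter.Eventually.of_forall fun y => ?_)
  dsimp only
  by_cases hy : y ∈ Ω
  · rw [Set.indicator_of_mem hy]
  · rw [Set.indicator_of_notMem hy]
    have hz : ψ j (x - y) = 0 := by
      by_contra h
      exact hy (cone y (hψsupp j h))
    rw [hz, zero_mul, zero_mul]
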